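/- Two-way termination similarity is sound for contextual equivalence in Ref²: if p ≡_r q then p ≡ctx_r q, and if c ≡_w d then c ≡ctx_w d, where ≡ = ≼ ∩ ≽ is the symmetrization of termination similarity. -/

import Mathlib

/-! # Statement 19: two-way termination similarity is sound for contextual equivalence in Ref² -/
namespace RefLang

/-- Expressions of Ref² over the set `Loc` of locations. -/
inductive RExp (Loc : Type) : Type
  | loc : Loc → RExp Loc
  | int : ℤ → RExp Loc
  | deref : RExp Loc → RExp Loc
  | add : RExp Loc → RExp Loc → RExp Loc
  | sub : RExp Loc → RExp Loc → RExp Loc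

mutual
/-- Readers of Ref². -/
inductive Rd (Loc : Type) : Type
  | skip : Rd Loc
  | whileE : RExp Loc → Rd Loc → Rd Loc
  /-- `e := p` -/
  | assign : RExp Loc → Rd Loc → Rd Loc
  /-- `if e then p else q` -/
  | ite : RExp Loc → Rd Loc → Rd Loc → Rd Loc
  | seq : Rd Loc → Rd Loc → Rd Loc
  /-- `&p` -/
  | ref : Rd Loc → Rd Loc
  | expr : RExp Loc → Rd Loc
  | proc : Rd Loc → Rd Loc
/-- Writers of Ref².  Here values are elements of `V(Rd) = Loc ⊕ ℤ ⊕ Rd Loc` and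
stores are partial maps `Loc → Option (V(Rd))`. -/
inductive Wr (Loc : Type) : Type
  /-- `e := c` -/
  | assignW : RExp Loc → Wr Loc → Wr Loc
  /-- `c ; q` -/
  | seqW : Wr Loc → Rd Loc → Wr Loc
  /-- `&c` -/
  | refW : Wr Loc → Wr Loc
  /-- `s.c` -/
  | outW : (Loc → Option (Loc ⊕ ℤ ⊕ Rd Loc)) → Wr Loc → Wr Loc
  /-- `[p]_s` -/
  | runW : Rd Loc → (Loc → Option (Loc ⊕ ℤ ⊕ Rd Loc)) → Wr Loc
  /-- `ret_{v,s}` -/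
  | retV : (Loc ⊕ ℤ ⊕ Rd Loc) → (Loc → Option (Loc ⊕ ℤ ⊕ Rd Loc)) → Wr Loc
  /-- `ret_s` -/
  | retS : (Loc → Option (Loc ⊕ ℤ ⊕ Rd Loc)) → Wr Loc
end

/-- Values `V(Rd)`. -/
abbrev Val (Loc : Type) : Type := Loc ⊕ ℤ ⊕ Rd Loc

/-- Stores `𝒮(Rd)`: partial maps from locations to values. -/
abbrev St (Loc : Type) : Type := Loc → Option (Val Loc)

variable {Loc : Type}

open Classical in
/-- Store update `s[l ↦ v]`. -/
noncomputable def updS (s : St Loc) (l : Loc) (v : Val Loc) : St Loc :=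
  fun l' => if l' = l then some v else s l'

/-- Partial expression evaluation `eev : 𝒮(Rd) × Ex ⇀ V(Rd)`. -/
def eev (s : St Loc) : RExp Loc → Option (Val Loc)
  | .loc l => some (.inl l)
  | .int n => some (.inr (.inl n))
  | .deref e =>
      match eev s e with
      | some (.inl l) => s l
      | _ => none
  | .add e₁ e₂ =>
      match eev s e₁, eev s e₂ with
      | some (.inr (.inl n₁)), some (.inr (.inl n₂)) => some (.inr (.inl (n₁ + n₂)))
      | _, _ => none
  | .sub e₁ e₂ =>
      match eev s e₁, eev s e₂ with
      | some (.inr (.inl n₁)), some (.inr (.inl n₂)) => some (.inr (.inl (n₁ - n₂)))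
      | _, _ => none

/-- The reader semantics of Ref²: `rstep p s = some c` means `p,s → c` (there is at
most one transition from each `p,s`; `none` means `p` is stuck at `s`). -/
def rstep : Rd Loc → St Loc → Option (Wr Loc)
  | .skip, s => some (.retS s)
  | .whileE e p, s =>
      match eev s e with
      | some (.inr (.inl n)) =>
          if n = 0 then some (.retS s)
          else some (.outW s (.runW (.seq p (.whileE e p)) s))
      | _ => none
  | .assign e p, s => some (.assignW e (.runW p s))
  | .ite e p q, s =>
      match eev s e with
      | some (.inr (.inl n)) =>
          if n = 0 then some (.outW s (.runW q s)) else some (.outW s (.runW p s))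
      | _ => none
  | .seq p q, s => some (.seqW (.runW p s) q)
  | .ref p, s => some (.refW (.runW p s))
  | .expr e, s =>
      match eev s e with
      | some (.inr (.inr p)) => some (.outW s (.runW p s))
      | some v => some (.retV v s)
      | none => none
  | .proc p, s => some (.retV (.inr (.inr p)) s)

/-- Labels of writer transitions: `tau d` is `c → d`, `out s d` is `c →ˢ d`,
`dn s` is `c ↓ s`, and `dnV v s` is `c ↓ v,s`. -/
inductive WLab (Loc : Type) : Type
  | tau : Wr Loc → WLab Loc
  | out : St Loc → Wr Loc → WLab Loc
  | dn : St Loc → WLab Loc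
  | dnV : Val Loc → St Loc → WLab Loc

/-- The writer semantics of Ref², as an inductively defined (nondeterministic)
labelled transition relation. -/
inductive WTr : Wr Loc → WLab Loc → Prop
  | runW {p : Rd Loc} {s c} : rstep p s = some c → WTr (.runW p s) (.tau c)
  | retV {v : Val Loc} {s} : WTr (.retV v s) (.dnV v s)
  | retS {s : St Loc} : WTr (.retS s) (.dn s)
  | outW {s : St Loc} {c} : WTr (.outW s c) (.out s c)
  | refTau {c d : Wr Loc} : WTr c (.tau d) → WTr (.refW c) (.tau (.refW d))
  | refOut {c d : Wr Loc} {s} : WTr c (.out s d) → WTr (.refW c) (.out s (.refW d))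
  | refDn {c : Wr Loc} {v s l} :
      WTr c (.dnV v s) → s l = none → WTr (.refW c) (.dnV (.inl l) (updS s l v))
  | seqTau {c d : Wr Loc} {q} : WTr c (.tau d) → WTr (.seqW c q) (.tau (.seqW d q))
  | seqOut {c d : Wr Loc} {s q} :
      WTr c (.out s d) → WTr (.seqW c q) (.out s (.seqW d q))
  | seqDnV {c : Wr Loc} {v s q} :
      WTr c (.dnV v s) → WTr (.seqW c q) (.out s (.runW q s))
  | seqDn {c : Wr Loc} {s q} : WTr c (.dn s) → WTr (.seqW c q) (.tau (.runW q s))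
  | asgTau {e} {c d : Wr Loc} :
      WTr c (.tau d) → WTr (.assignW e c) (.tau (.assignW e d))
  | asgOut {e} {c d : Wr Loc} {s} :
      WTr c (.out s d) → WTr (.assignW e c) (.out s (.assignW e d))
  | asgDn {e} {c : Wr Loc} {v s l} :
      eev s e = some (.inl l) → WTr c (.dnV v s) →
      WTr (.assignW e c) (.dn (updS s l v))

/-- A single (silent or output) writer step. -/
def Step1 (c d : Wr Loc) : Prop := WTr c (.tau d) ∨ ∃ s, WTr c (.out s d)

/-- The weak transition `c ⇒ d`: a finite chain of `→` and `→ˢ` steps. -/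
def Wk : Wr Loc → Wr Loc → Prop := Relation.ReflTransGen Step1

/-- `c ⇓ s`: `c ⇒ c' ↓ s` for some `c'`. -/
def BigS (c : Wr Loc) (s : St Loc) : Prop := ∃ c', Wk c c' ∧ WTr c' (.dn s)

/-- `c ⇓ v,s`: `c ⇒ c' ↓ v,s` for some `c'`. -/
def BigV (c : Wr Loc) (v : Val Loc) (s : St Loc) : Prop :=
  ∃ c', Wk c c' ∧ WTr c' (.dnV v s)

/-- `c ⇓`: the writer `c` terminates. -/
def ConvW (c : Wr Loc) : Prop := (∃ v s, BigV c v s) ∨ (∃ s, BigS c s)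

/-- `p,s ⇓`: the reader `p` terminates on the input store `s`. -/
def ConvR (p : Rd Loc) (s : St Loc) : Prop := ∃ c, rstep p s = some c ∧ ConvW c

/-- The relational lifting `V(R_r) = Δ_Loc ∪ Δ_ℤ ∪ R_r` on values. -/
def VRel (Rr : Rd Loc → Rd Loc → Prop) : Val Loc → Val Loc → Prop
  | .inl l, .inl l' => l = l'
  | .inr (.inl n), .inr (.inl n') => n = n'
  | .inr (.inr p), .inr (.inr p') => Rr p p'
  | _, _ => False

/-- The relational lifting `𝒮(R_r)` on stores: equal domains and `V(R_r)`-related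
values at every defined location. -/
def SRel (Rr : Rd Loc → Rd Loc → Prop) (s₁ s₂ : St Loc) : Prop :=
  ∀ l, (s₁ l = none ∧ s₂ l = none) ∨
    ∃ v₁ v₂, s₁ l = some v₁ ∧ s₂ l = some v₂ ∧ VRel Rr v₁ v₂

end RefLang
namespace RefLang

variable {Loc : Type}

/-- A (higher-order) termination simulation on Ref². -/
def IsTermSim (Rr : Rd Loc → Rd Loc → Prop) (Rw : Wr Loc → Wr Loc → Prop) : Prop :=
  (∀ p q s c, Rr p q → rstep p s = some c → ∃ d, rstep q s = some d ∧ Rw c d) ∧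
  (∀ c d c', Rw c d → (WTr c (.tau c') ∨ ∃ s, WTr c (.out s c')) →
      ∃ d', Wk d d' ∧ Rw c' d') ∧
  (∀ c d s, Rw c d → WTr c (.dn s) → ∃ s', BigS d s' ∧ SRel Rr s s') ∧
  (∀ c d v s, Rw c d → WTr c (.dnV v s) →
      ∃ v' s', BigV d v' s' ∧ VRel Rr v v' ∧ SRel Rr s s')

/-- Termination similarity `≼_r` on readers: the greatest termination simulation
(the union of all termination simulations). -/
def SimR (p q : Rd Loc) : Prop := ∃ Rr Rw, IsTermSim Rr Rw ∧ Rr p q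

/-- Termination similarity `≼_w` on writers. -/
def SimW (c d : Wr Loc) : Prop := ∃ Rr Rw, IsTermSim Rr Rw ∧ Rw c d

/-- The symmetrization `≡_r = ≼_r ∩ ≽_r` of termination similarity on readers. -/
def EqvR (p q : Rd Loc) : Prop := SimR p q ∧ SimR q p

/-- The symmetrization `≡_w = ≼_w ∩ ≽_w` of termination similarity on writers. -/
def EqvW (c d : Wr Loc) : Prop := SimW c d ∧ SimW d c

end RefLang
namespace RefLang

/-- Sorts of Ref² terms: readers (`r`) and writers (`w`). -/
inductive Sort2 : Type
  | r
  | w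

/-- Terms of a given sort. -/
def Tm2 (Loc : Type) : Sort2 → Type
  | .r => Rd Loc
  | .w => Wr Loc

mutual
/-- Reader-sorted one-hole contexts of Ref² with a hole of sort `h`. -/
inductive CtxR (Loc : Type) : Sort2 → Type
  | hole : CtxR Loc .r
  | whileE {h} : RExp Loc → CtxR Loc h → CtxR Loc h
  | assign {h} : RExp Loc → CtxR Loc h → CtxR Loc h
  | iteL {h} : RExp Loc → CtxR Loc h → Rd Loc → CtxR Loc h
  | iteR {h} : RExp Loc → Rd Loc → CtxR Loc h → CtxR Loc h
  | seqL {h} : CtxR Loc h → Rd Loc → CtxR Loc h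
  | seqR {h} : Rd Loc → CtxR Loc h → CtxR Loc h
  | ref {h} : CtxR Loc h → CtxR Loc h
  | proc {h} : CtxR Loc h → CtxR Loc h
/-- Writer-sorted one-hole contexts of Ref² with a hole of sort `h`. -/
inductive CtxW (Loc : Type) : Sort2 → Type
  | hole : CtxW Loc .w
  | assignW {h} : RExp Loc → CtxW Loc h → CtxW Loc h
  | seqWL {h} : CtxW Loc h → Rd Loc → CtxW Loc h
  | seqWR {h} : Wr Loc → CtxR Loc h → CtxW Loc h
  | refW {h} : CtxW Loc h → CtxW Loc h
  /-- `s.C` with the hole in the writer argument. -/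
  | outWC {h} : St Loc → CtxW Loc h → CtxW Loc h
  /-- `S.c` with the hole in the store. -/
  | outWS {h} : CtxS Loc h → Wr Loc → CtxW Loc h
  /-- `[C]_s` with the hole in the reader. -/
  | runWP {h} : CtxR Loc h → St Loc → CtxW Loc h
  /-- `[p]_S` with the hole in the store. -/
  | runWS {h} : Rd Loc → CtxS Loc h → CtxW Loc h
  /-- `ret_{C,s}` with the hole inside the (reader) value. -/
  | retVV {h} : CtxR Loc h → St Loc → CtxW Loc h
  /-- `ret_{v,S}` with the hole in the store. -/
  | retVS {h} : Val Loc → CtxS Loc h → CtxW Loc h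
  /-- `ret_S` with the hole in the store. -/
  | retSS {h} : CtxS Loc h → CtxW Loc h
/-- One-hole store contexts: a store `s` whose value at the location `l` is a
reader containing the hole. -/
inductive CtxS (Loc : Type) : Sort2 → Type
  | mk {h} : St Loc → Loc → CtxR Loc h → CtxS Loc h
end

variable {Loc : Type}

mutual
/-- Plugging a term into a reader-sorted one-hole context. -/
noncomputable def plugR : {h : Sort2} → CtxR Loc h → Tm2 Loc h → Rd Loc
  | _, .hole, t => t
  | _, .whileE e C, t => .whileE e (plugR C t)
  | _, .assign e C, t => .assign e (plugR C t)
  | _, .iteL e C q, t => .ite e (plugR C t) q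
  | _, .iteR e p C, t => .ite e p (plugR C t)
  | _, .seqL C q, t => .seq (plugR C t) q
  | _, .seqR p C, t => .seq p (plugR C t)
  | _, .ref C, t => .ref (plugR C t)
  | _, .proc C, t => .proc (plugR C t)
/-- Plugging a term into a writer-sorted one-hole context. -/
noncomputable def plugW : {h : Sort2} → CtxW Loc h → Tm2 Loc h → Wr Loc
  | _, .hole, t => t
  | _, .assignW e C, t => .assignW e (plugW C t)
  | _, .seqWL C q, t => .seqW (plugW C t) q
  | _, .seqWR c C, t => .seqW c (plugR C t)
  | _, .refW C, t => .refW (plugW C t)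
  | _, .outWC s C, t => .outW s (plugW C t)
  | _, .outWS Cs c, t => .outW (plugS Cs t) c
  | _, .runWP C s, t => .runW (plugR C t) s
  | _, .runWS p Cs, t => .runW p (plugS Cs t)
  | _, .retVV C s, t => .retV (.inr (.inr (plugR C t))) s
  | _, .retVS v Cs, t => .retV v (plugS Cs t)
  | _, .retSS Cs, t => .retS (plugS Cs t)
/-- Plugging a term into a one-hole store context. -/
noncomputable def plugS : {h : Sort2} → CtxS Loc h → Tm2 Loc h → St Loc
  | _, .mk s l C, t => updS s l (.inr (.inr (plugR C t)))
end

/-- Contextual equivalence `≡ctx_r` on readers: `C[p]` and `C[q]` have the same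
termination behaviour for every context with a reader-sorted hole. -/
def CtxEqR (p q : Rd Loc) : Prop :=
  (∀ (C : CtxR Loc .r) (s : St Loc), ConvR (plugR C p) s ↔ ConvR (plugR C q) s) ∧
  (∀ C : CtxW Loc .r, ConvW (plugW C p) ↔ ConvW (plugW C q))

/-- Contextual equivalence `≡ctx_w` on writers: `C[c]` and `C[d]` have the same
termination behaviour for every context with a writer-sorted hole. -/
def CtxEqW (c d : Wr Loc) : Prop :=
  (∀ (C : CtxR Loc .w) (s : St Loc), ConvR (plugR C c) s ↔ ConvR (plugR C d) s) ∧
  (∀ C : CtxW Loc .w, ConvW (plugW C c) ↔ ConvW (plugW C d))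

end RefLang

namespace RefLang

variable {Loc : Type}

/-! ### Basic lemmas about `VRel`, `SRel`, `Wk` -/

theorem vrel_refl {Rr : Rd Loc → Rd Loc → Prop} (hR : ∀ p, Rr p p) :
    ∀ v : Val Loc, VRel Rr v v
  | .inl _ => rfl
  | .inr (.inl _) => rfl
  | .inr (.inr p) => hR p

theorem vrel_mono {Rr Rr' : Rd Loc → Rd Loc → Prop} (h : ∀ p q, Rr p q → Rr' p q) :
    ∀ v w : Val Loc, VRel Rr v w → VRel Rr' v w
  | .inl _, .inl _, hv => hv
  | .inr (.inl _), .inr (.inl _), hv => hv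
  | .inr (.inr _), .inr (.inr _), hv => h _ _ hv

theorem srel_mono {Rr Rr' : Rd Loc → Rd Loc → Prop} (h : ∀ p q, Rr p q → Rr' p q)
    {s₁ s₂ : St Loc} (hs : SRel Rr s₁ s₂) : SRel Rr' s₁ s₂ := by
  intro l
  rcases hs l with ⟨h1, h2⟩ | ⟨v₁, v₂, h1, h2, hv⟩
  · exact Or.inl ⟨h1, h2⟩
  · exact Or.inr ⟨v₁, v₂, h1, h2, vrel_mono h _ _ hv⟩

theorem wk_refl (c : Wr Loc) : Wk c c := Relation.ReflTransGen.refl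

theorem wk_trans {a b c : Wr Loc} (h1 : Wk a b) (h2 : Wk b c) : Wk a c :=
  Relation.ReflTransGen.trans h1 h2

/-! ### `(SimR, SimW)` is itself a termination simulation -/

theorem isTermSim_eq : IsTermSim (Eq : Rd Loc → Rd Loc → Prop) Eq := by
  refine ⟨?_, ?_, ?_, ?_⟩
  · rintro p q s c rfl h; exact ⟨c, h, rfl⟩
  · rintro c d c' rfl h
    exact ⟨c', Relation.ReflTransGen.single h, rfl⟩
  · rintro c d s rfl h
    refine ⟨s, ⟨c, wk_refl c, h⟩, ?_⟩
    intro l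
    cases hl : s l with
    | none => exact Or.inl ⟨rfl, rfl⟩
    | some v => exact Or.inr ⟨v, v, rfl, rfl, vrel_refl (fun _ => rfl) v⟩
  · rintro c d v s rfl h
    refine ⟨v, s, ⟨c, wk_refl c, h⟩, vrel_refl (fun _ => rfl) v, ?_⟩
    intro l
    cases hl : s l with
    | none => exact Or.inl ⟨rfl, rfl⟩
    | some v => exact Or.inr ⟨v, v, rfl, rfl, vrel_refl (fun _ => rfl) v⟩

theorem simR_refl (p : Rd Loc) : SimR p p := ⟨Eq, Eq, isTermSim_eq, rfl⟩

theorem simW_refl (c : Wr Loc) : SimW c c := ⟨Eq, Eq, isTermSim_eq, rfl⟩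

theorem isTermSim_sim : IsTermSim (SimR (Loc := Loc)) SimW := by
  refine ⟨?_, ?_, ?_, ?_⟩
  · rintro p q s c ⟨Rr, Rw, hS, hpq⟩ hr
    obtain ⟨d, hd, hcd⟩ := hS.1 p q s c hpq hr
    exact ⟨d, hd, Rr, Rw, hS, hcd⟩
  · rintro c d c' ⟨Rr, Rw, hS, hcd⟩ hstep
    obtain ⟨d', hwk, h'⟩ := hS.2.1 c d c' hcd hstep
    exact ⟨d', hwk, Rr, Rw, hS, h'⟩
  · rintro c d s ⟨Rr, Rw, hS, hcd⟩ hdn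
    obtain ⟨s', hb, hs⟩ := hS.2.2.1 c d s hcd hdn
    exact ⟨s', hb, srel_mono (fun p q h => ⟨Rr, Rw, hS, h⟩) hs⟩
  · rintro c d v s ⟨Rr, Rw, hS, hcd⟩ hdn
    obtain ⟨v', s', hb, hv, hs⟩ := hS.2.2.2 c d v s hcd hdn
    exact ⟨v', s', hb, vrel_mono (fun p q h => ⟨Rr, Rw, hS, h⟩) _ _ hv,
      srel_mono (fun p q h => ⟨Rr, Rw, hS, h⟩) hs⟩

theorem simW_wk {m d m' : Wr Loc} (h : SimW m d) (hwk : Wk m m') :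
    ∃ d', Wk d d' ∧ SimW m' d' := by
  induction hwk with
  | refl => exact ⟨d, wk_refl d, h⟩
  | tail _ hstep ih =>
    obtain ⟨e, hwe, he⟩ := ih
    obtain ⟨e', hwe', he'⟩ := isTermSim_sim.2.1 _ _ _ he hstep
    exact ⟨e', wk_trans hwe hwe', he'⟩

theorem simW_bigS {m d : Wr Loc} {s : St Loc} (h : SimW m d) (hb : BigS m s) :
    ∃ s', BigS d s' ∧ SRel SimR s s' := by
  obtain ⟨m₀, hwk, hdn⟩ := hb
  obtain ⟨d₀, hwd, h₀⟩ := simW_wk h hwk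
  obtain ⟨s', ⟨d₁, hw1, hdn1⟩, hs⟩ := isTermSim_sim.2.2.1 _ _ _ h₀ hdn
  exact ⟨s', ⟨d₁, wk_trans hwd hw1, hdn1⟩, hs⟩

theorem simW_bigV {m d : Wr Loc} {v : Val Loc} {s : St Loc} (h : SimW m d)
    (hb : BigV m v s) : ∃ v' s', BigV d v' s' ∧ VRel SimR v v' ∧ SRel SimR s s' := by
  obtain ⟨m₀, hwk, hdn⟩ := hb
  obtain ⟨d₀, hwd, h₀⟩ := simW_wk h hwk
  obtain ⟨v', s', ⟨d₁, hw1, hdn1⟩, hv, hs⟩ := isTermSim_sim.2.2.2 _ _ _ _ h₀ hdn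
  exact ⟨v', s', ⟨d₁, wk_trans hwd hw1, hdn1⟩, hv, hs⟩

/-! ### Transitivity of similarity -/

theorem vrel_comp {Rr Rr' : Rd Loc → Rd Loc → Prop} :
    ∀ {v w u : Val Loc}, VRel Rr v w → VRel Rr' w u →
      VRel (fun p r => ∃ q, Rr p q ∧ Rr' q r) v u := by
  intro v w u h1 h2
  match v, w, u with
  | .inl _, .inl _, .inl _ => exact h1.trans h2
  | .inr (.inl _), .inr (.inl _), .inr (.inl _) => exact h1.trans h2
  | .inr (.inr _), .inr (.inr _), .inr (.inr _) => exact ⟨_, h1, h2⟩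

theorem srel_comp {Rr Rr' : Rd Loc → Rd Loc → Prop} {s₁ s₂ s₃ : St Loc}
    (h1 : SRel Rr s₁ s₂) (h2 : SRel Rr' s₂ s₃) :
    SRel (fun p r => ∃ q, Rr p q ∧ Rr' q r) s₁ s₃ := by
  intro l
  rcases h1 l with ⟨a1, a2⟩ | ⟨v₁, v₂, a1, a2, av⟩
  · rcases h2 l with ⟨b1, b2⟩ | ⟨w₂, w₃, b1, b2, bv⟩
    · exact Or.inl ⟨a1, b2⟩
    · rw [a2] at b1; exact absurd b1 (by simp)
  · rcases h2 l with ⟨b1, b2⟩ | ⟨w₂, w₃, b1, b2, bv⟩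
    · rw [a2] at b1; exact absurd b1 (by simp)
    · rw [a2] at b1; injection b1 with b1; subst b1
      exact Or.inr ⟨v₁, w₃, a1, b2, vrel_comp av bv⟩

theorem isTermSim_comp :
    IsTermSim (fun p r : Rd Loc => ∃ q, SimR p q ∧ SimR q r)
      (fun c e : Wr Loc => ∃ d, SimW c d ∧ SimW d e) := by
  refine ⟨?_, ?_, ?_, ?_⟩
  · rintro p r s c ⟨q, h1, h2⟩ hr
    obtain ⟨d, hd, hcd⟩ := isTermSim_sim.1 p q s c h1 hr
    obtain ⟨e, he, hde⟩ := isTermSim_sim.1 q r s d h2 hd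
    exact ⟨e, he, d, hcd, hde⟩
  · rintro c e c' ⟨d, h1, h2⟩ hstep
    obtain ⟨d', hwd, hd'⟩ := isTermSim_sim.2.1 c d c' h1 hstep
    obtain ⟨e', hwe, he'⟩ := simW_wk h2 hwd
    exact ⟨e', hwe, d', hd', he'⟩
  · rintro c e s ⟨d, h1, h2⟩ hdn
    obtain ⟨s', hb, hs⟩ := isTermSim_sim.2.2.1 c d s h1 hdn
    obtain ⟨s'', hb', hs'⟩ := simW_bigS h2 hb
    exact ⟨s'', hb', srel_comp hs hs'⟩
  · rintro c e v s ⟨d, h1, h2⟩ hdn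
    obtain ⟨v', s', hb, hv, hs⟩ := isTermSim_sim.2.2.2 c d v s h1 hdn
    obtain ⟨v'', s'', hb', hv', hs'⟩ := simW_bigV h2 hb
    exact ⟨v'', s'', hb', vrel_comp hv hv', srel_comp hs hs'⟩

theorem simR_trans {p q r : Rd Loc} (h1 : SimR p q) (h2 : SimR q r) : SimR p r :=
  ⟨_, _, isTermSim_comp, q, h1, h2⟩

theorem simW_trans {c d e : Wr Loc} (h1 : SimW c d) (h2 : SimW d e) : SimW c e :=
  ⟨_, _, isTermSim_comp, d, h1, h2⟩

/-! ### The Howe-style precongruence candidate -/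

mutual
/-- Howe-style closure of `SimR` on readers. -/
inductive Gr : Rd Loc → Rd Loc → Prop
  | skip {q} : SimR .skip q → Gr .skip q
  | whileE {e b b' q} : Gr b b' → SimR (.whileE e b') q → Gr (.whileE e b) q
  | assign {e b b' q} : Gr b b' → SimR (.assign e b') q → Gr (.assign e b) q
  | iteG {e b₁ b₁' b₂ b₂' q} : Gr b₁ b₁' → Gr b₂ b₂' →
      SimR (.ite e b₁' b₂') q → Gr (.ite e b₁ b₂) q
  | seqG {b₁ b₁' b₂ b₂' q} : Gr b₁ b₁' → Gr b₂ b₂' →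
      SimR (.seq b₁' b₂') q → Gr (.seq b₁ b₂) q
  | refG {b b' q} : Gr b b' → SimR (.ref b') q → Gr (.ref b) q
  | exprG {e q} : SimR (.expr e) q → Gr (.expr e) q
  | procG {b b' q} : Gr b b' → SimR (.proc b') q → Gr (.proc b) q
/-- Value lifting of `Gr`. -/
inductive GVal : Val Loc → Val Loc → Prop
  | loc (l) : GVal (.inl l) (.inl l)
  | int (n) : GVal (.inr (.inl n)) (.inr (.inl n))
  | rd {p p'} : Gr p p' → GVal (.inr (.inr p)) (.inr (.inr p'))
/-- Option lifting of `GVal`. -/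
inductive GOpt : Option (Val Loc) → Option (Val Loc) → Prop
  | none : GOpt none none
  | some {v v'} : GVal v v' → GOpt (some v) (some v')
/-- Howe-style closure of `SimW` on writers. -/
inductive Gw : Wr Loc → Wr Loc → Prop
  | assignW {e c c' d} : Gw c c' → SimW (.assignW e c') d → Gw (.assignW e c) d
  | seqW {c c' q q' d} : Gw c c' → Gr q q' → SimW (.seqW c' q') d → Gw (.seqW c q) d
  | refW {c c' d} : Gw c c' → SimW (.refW c') d → Gw (.refW c) d
  | outW {s s' : St Loc} {c c' d} :
      (∀ l, GOpt (s l) (s' l)) →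
      Gw c c' → SimW (.outW s' c') d → Gw (.outW s c) d
  | runW {p p'} {s s' : St Loc} {d} : Gr p p' →
      (∀ l, GOpt (s l) (s' l)) →
      SimW (.runW p' s') d → Gw (.runW p s) d
  | retV {v v'} {s s' : St Loc} {d} : GVal v v' →
      (∀ l, GOpt (s l) (s' l)) →
      SimW (.retV v' s') d → Gw (.retV v s) d
  | retS {s s' : St Loc} {d} :
      (∀ l, GOpt (s l) (s' l)) →
      SimW (.retS s') d → Gw (.retS s) d
end

/-- Store lifting of `Gr`. -/
def SG (s s' : St Loc) : Prop := ∀ l, GOpt (s l) (s' l)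

theorem grRefl : ∀ p : Rd Loc, Gr p p
  | .skip => .skip (simR_refl _)
  | .whileE e b => .whileE (grRefl b) (simR_refl _)
  | .assign e b => .assign (grRefl b) (simR_refl _)
  | .ite e b₁ b₂ => .iteG (grRefl b₁) (grRefl b₂) (simR_refl _)
  | .seq b₁ b₂ => .seqG (grRefl b₁) (grRefl b₂) (simR_refl _)
  | .ref b => .refG (grRefl b) (simR_refl _)
  | .expr e => .exprG (simR_refl _)
  | .proc b => .procG (grRefl b) (simR_refl _)

theorem gvalRefl : ∀ v : Val Loc, GVal v v
  | .inl l => .loc l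
  | .inr (.inl n) => .int n
  | .inr (.inr p) => .rd (grRefl p)

theorem sgRefl (s : St Loc) : SG s s := by
  intro l
  cases s l with
  | none => exact .none
  | some v => exact .some (gvalRefl v)

theorem gwRefl : ∀ c : Wr Loc, Gw c c
  | .assignW e c => .assignW (gwRefl c) (simW_refl _)
  | .seqW c q => .seqW (gwRefl c) (grRefl q) (simW_refl _)
  | .refW c => .refW (gwRefl c) (simW_refl _)
  | .outW s c => .outW (sgRefl s) (gwRefl c) (simW_refl _)
  | .runW p s => .runW (grRefl p) (sgRefl s) (simW_refl _)
  | .retV v s => .retV (gvalRefl v) (sgRefl s) (simW_refl _)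
  | .retS s => .retS (sgRefl s) (simW_refl _)

theorem grSimR {p q r : Rd Loc} (h : Gr p q) (h' : SimR q r) : Gr p r := by
  cases h with
  | skip hs => exact .skip (simR_trans hs h')
  | whileE hb hs => exact .whileE hb (simR_trans hs h')
  | assign hb hs => exact .assign hb (simR_trans hs h')
  | iteG h1 h2 hs => exact .iteG h1 h2 (simR_trans hs h')
  | seqG h1 h2 hs => exact .seqG h1 h2 (simR_trans hs h')
  | refG hb hs => exact .refG hb (simR_trans hs h')
  | exprG hs => exact .exprG (simR_trans hs h')
  | procG hb hs => exact .procG hb (simR_trans hs h')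

theorem gwSimW {c d e : Wr Loc} (h : Gw c d) (h' : SimW d e) : Gw c e := by
  cases h with
  | assignW hc hs => exact .assignW hc (simW_trans hs h')
  | seqW hc hq hs => exact .seqW hc hq (simW_trans hs h')
  | refW hc hs => exact .refW hc (simW_trans hs h')
  | outW hst hc hs => exact .outW hst hc (simW_trans hs h')
  | runW hp hst hs => exact .runW hp hst (simW_trans hs h')
  | retV hv hst hs => exact .retV hv hst (simW_trans hs h')
  | retS hst hs => exact .retS hst (simW_trans hs h')

theorem grOfSim {p q : Rd Loc} (h : SimR p q) : Gr p q := grSimR (grRefl p) h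

theorem gwOfSim {c d : Wr Loc} (h : SimW c d) : Gw c d := gwSimW (gwRefl c) h

theorem gvalTrans {v w u : Val Loc} (h : GVal v w) (h' : VRel SimR w u) : GVal v u := by
  cases h with
  | loc l =>
    match u with
    | .inl l' => cases h'; exact .loc l
  | int n =>
    match u with
    | .inr (.inl n') => cases h'; exact .int n
  | rd hp =>
    match u with
    | .inr (.inr r) => exact .rd (grSimR hp h')

theorem gopt_none_left {o : Option (Val Loc)} (h : GOpt none o) : o = none := by
  cases h; rfl

theorem gopt_none_right {o : Option (Val Loc)} (h : GOpt o none) : o = none := by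
  cases h; rfl

theorem gopt_some_left {o : Option (Val Loc)} {v} (h : GOpt (some v) o) :
    ∃ v', o = some v' ∧ GVal v v' := by
  cases h with
  | some hv => exact ⟨_, rfl, hv⟩

theorem gopt_some_right {o : Option (Val Loc)} {v'} (h : GOpt o (some v')) :
    ∃ v, o = some v ∧ GVal v v' := by
  cases h with
  | some hv => exact ⟨_, rfl, hv⟩

theorem sgTrans {s s' s'' : St Loc} (h : SG s s') (h' : SRel SimR s' s'') :
    SG s s'' := by
  intro l
  have hg := h l
  rcases h' l with ⟨b1, b2⟩ | ⟨w, w', b1, b2, bv⟩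
  · rw [b2]; rw [b1] at hg; rw [gopt_none_right hg]; exact .none
  · rw [b2]; rw [b1] at hg
    obtain ⟨v, hv, av⟩ := gopt_some_right hg
    rw [hv]; exact .some (gvalTrans av bv)

theorem gval_vrel {v w : Val Loc} (h : GVal v w) : VRel Gr v w := by
  cases h with
  | loc l => rfl
  | int n => rfl
  | rd hp => exact hp

theorem sg_srel {s s' : St Loc} (h : SG s s') : SRel Gr s s' := by
  intro l
  have hg := h l
  cases hl : s l with
  | none => rw [hl] at hg; exact Or.inl ⟨rfl, gopt_none_left hg⟩
  | some v =>
    rw [hl] at hg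
    obtain ⟨w, hw, av⟩ := gopt_some_left hg
    exact Or.inr ⟨v, w, rfl, hw, gval_vrel av⟩

/-! ### Expression evaluation respects `SG` -/

theorem eevG {s₁ s₂ : St Loc} (hs : SG s₁ s₂) :
    ∀ e : RExp Loc, GOpt (eev s₁ e) (eev s₂ e) := by
  intro e
  induction e with
  | loc l => exact .some (.loc l)
  | int n => exact .some (.int n)
  | deref e ih =>
    cases hv : eev s₁ e with
    | none =>
      rw [hv] at ih
      simp [eev, hv, gopt_none_left ih]
      exact .none
    | some v =>
      rw [hv] at ih
      obtain ⟨v', hv', hg⟩ := gopt_some_left ih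
      cases hg with
      | loc l => simp [eev, hv, hv']; exact hs l
      | int n => simp [eev, hv, hv']; exact .none
      | rd hp => simp [eev, hv, hv']; exact .none
  | add e₁ e₂ ih₁ ih₂ =>
    cases hv : eev s₁ e₁ with
    | none =>
      rw [hv] at ih₁
      simp [eev, hv, gopt_none_left ih₁]; exact .none
    | some v =>
      rw [hv] at ih₁
      obtain ⟨v', hv', hg⟩ := gopt_some_left ih₁
      cases hg with
      | loc l => simp [eev, hv, hv']; exact .none
      | rd hp => simp [eev, hv, hv']; exact .none
      | int n =>
        cases hw : eev s₁ e₂ with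
        | none =>
          rw [hw] at ih₂
          simp [eev, hv, hv', hw, gopt_none_left ih₂]; exact .none
        | some w =>
          rw [hw] at ih₂
          obtain ⟨w', hw', hg'⟩ := gopt_some_left ih₂
          cases hg' with
          | loc l => simp [eev, hv, hv', hw, hw']; exact .none
          | rd hp => simp [eev, hv, hv', hw, hw']; exact .none
          | int m => simp [eev, hv, hv', hw, hw']; exact .some (.int _)
  | sub e₁ e₂ ih₁ ih₂ =>
    cases hv : eev s₁ e₁ with
    | none =>
      rw [hv] at ih₁
      simp [eev, hv, gopt_none_left ih₁]; exact .none
    | some v =>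
      rw [hv] at ih₁
      obtain ⟨v', hv', hg⟩ := gopt_some_left ih₁
      cases hg with
      | loc l => simp [eev, hv, hv']; exact .none
      | rd hp => simp [eev, hv, hv']; exact .none
      | int n =>
        cases hw : eev s₁ e₂ with
        | none =>
          rw [hw] at ih₂
          simp [eev, hv, hv', hw, gopt_none_left ih₂]; exact .none
        | some w =>
          rw [hw] at ih₂
          obtain ⟨w', hw', hg'⟩ := gopt_some_left ih₂
          cases hg' with
          | loc l => simp [eev, hv, hv', hw, hw']; exact .none
          | rd hp => simp [eev, hv, hv', hw, hw']; exact .none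
          | int m => simp [eev, hv, hv', hw, hw']; exact .some (.int _)

/-! ### Key lemma: `Gr` simulates reader steps over `SG`-related stores -/

theorem grFinish {mid q : Rd Loc} {s₂ : St Loc} {c m : Wr Loc}
    (hsim : SimR mid q) (hm : rstep mid s₂ = some m) (hg : Gw c m) :
    ∃ d, rstep q s₂ = some d ∧ Gw c d := by
  obtain ⟨d, hd, hsw⟩ := isTermSim_sim.1 _ _ _ _ hsim hm
  exact ⟨d, hd, gwSimW hg hsw⟩

theorem grStep {p p' : Rd Loc} {s₁ s₂ : St Loc} {c : Wr Loc} (h : Gr p p')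
    (hs : SG s₁ s₂) (hr : rstep p s₁ = some c) :
    ∃ d, rstep p' s₂ = some d ∧ Gw c d := by
  cases h with
  | skip hq =>
    simp only [rstep, Option.some.injEq] at hr; subst hr
    exact grFinish hq rfl (.retS hs (simW_refl _))
  | @whileE e b b' q hb hq =>
    have hev := eevG hs e
    cases hv : eev s₁ e with
    | none => simp [rstep, hv] at hr
    | some v =>
      rw [hv] at hev
      obtain ⟨v', hv', hg⟩ := gopt_some_left hev
      cases hg with
      | loc l => simp [rstep, hv] at hr
      | rd hp => simp [rstep, hv] at hr
      | int n =>
        by_cases hn : n = 0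
        · subst hn
          simp only [rstep, hv, reduceIte, Option.some.injEq] at hr; subst hr
          refine grFinish hq ?_ (.retS hs (simW_refl _))
          simp [rstep, hv', if_pos rfl]
        · simp only [rstep, hv, if_neg hn, Option.some.injEq] at hr; subst hr
          refine grFinish hq ?_
            (.outW hs (.runW (.seqG hb (.whileE hb (simR_refl _)) (simR_refl _))
              hs (simW_refl _)) (simW_refl _))
          simp [rstep, hv', if_neg hn]
  | @assign e b b' q hb hq =>
    simp only [rstep, Option.some.injEq] at hr; subst hr
    exact grFinish hq rfl
      (.assignW (.runW hb hs (simW_refl _)) (simW_refl _))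
  | @iteG e b₁ b₁' b₂ b₂' q hb₁ hb₂ hq =>
    have hev := eevG hs e
    cases hv : eev s₁ e with
    | none => simp [rstep, hv] at hr
    | some v =>
      rw [hv] at hev
      obtain ⟨v', hv', hg⟩ := gopt_some_left hev
      cases hg with
      | loc l => simp [rstep, hv] at hr
      | rd hp => simp [rstep, hv] at hr
      | int n =>
        by_cases hn : n = 0
        · subst hn
          simp only [rstep, hv, reduceIte, Option.some.injEq] at hr; subst hr
          refine grFinish hq ?_ (.outW hs (.runW hb₂ hs (simW_refl _)) (simW_refl _))
          simp [rstep, hv', if_pos rfl]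
        · simp only [rstep, hv, if_neg hn, Option.some.injEq] at hr; subst hr
          refine grFinish hq ?_ (.outW hs (.runW hb₁ hs (simW_refl _)) (simW_refl _))
          simp [rstep, hv', if_neg hn]
  | @seqG b₁ b₁' b₂ b₂' q hb₁ hb₂ hq =>
    simp only [rstep, Option.some.injEq] at hr; subst hr
    exact grFinish hq rfl
      (.seqW (.runW hb₁ hs (simW_refl _)) hb₂ (simW_refl _))
  | @refG b b' q hb hq =>
    simp only [rstep, Option.some.injEq] at hr; subst hr
    exact grFinish hq rfl (.refW (.runW hb hs (simW_refl _)) (simW_refl _))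
  | @exprG e q hq =>
    have hev := eevG hs e
    cases hv : eev s₁ e with
    | none => simp [rstep, hv] at hr
    | some v =>
      rw [hv] at hev
      obtain ⟨v', hv', hg⟩ := gopt_some_left hev
      cases hg with
      | loc l =>
        simp only [rstep, hv, Option.some.injEq] at hr; subst hr
        refine grFinish hq ?_ (.retV (.loc l) hs (simW_refl _))
        simp [rstep, hv']
      | int n =>
        simp only [rstep, hv, Option.some.injEq] at hr; subst hr
        refine grFinish hq ?_ (.retV (.int n) hs (simW_refl _))
        simp [rstep, hv']
      | @rd p₀ p₀' hp =>
        simp only [rstep, hv, Option.some.injEq] at hr; subst hr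
        refine grFinish hq ?_ (.outW hs (.runW hp hs (simW_refl _)) (simW_refl _))
        simp [rstep, hv']
  | @procG b b' q hb hq =>
    simp only [rstep, Option.some.injEq] at hr; subst hr
    exact grFinish hq rfl (.retV (.rd hb) hs (simW_refl _))

/-! ### `Wk` congruences -/

theorem wkSeq {c c' : Wr Loc} {q : Rd Loc} (h : Wk c c') :
    Wk (.seqW c q) (.seqW c' q) :=
  Relation.ReflTransGen.lift (fun c => Wr.seqW c q)
    (fun _ _ (hs : Step1 _ _) => hs.elim (fun ht => Or.inl (WTr.seqTau ht))
      (fun ⟨s, ho⟩ => Or.inr ⟨s, WTr.seqOut ho⟩)) _ _ h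

theorem wkRef {c c' : Wr Loc} (h : Wk c c') : Wk (.refW c) (.refW c') :=
  Relation.ReflTransGen.lift Wr.refW
    (fun _ _ (hs : Step1 _ _) => hs.elim (fun ht => Or.inl (WTr.refTau ht))
      (fun ⟨s, ho⟩ => Or.inr ⟨s, WTr.refOut ho⟩)) _ _ h

theorem wkAsg {e : RExp Loc} {c c' : Wr Loc} (h : Wk c c') :
    Wk (.assignW e c) (.assignW e c') :=
  Relation.ReflTransGen.lift (Wr.assignW e)
    (fun _ _ (hs : Step1 _ _) => hs.elim (fun ht => Or.inl (WTr.asgTau ht))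
      (fun ⟨s, ho⟩ => Or.inr ⟨s, WTr.asgOut ho⟩)) _ _ h

theorem sgUpd {s s' : St Loc} {l : Loc} {v v' : Val Loc} (hs : SG s s')
    (hv : GVal v v') : SG (updS s l v) (updS s' l v') := by
  intro l'
  by_cases h : l' = l
  · simp [updS, h]; exact .some hv
  · simp [updS, h]; exact hs l'

/-! ### Transports along `SimW` -/

theorem t2 {m d c' : Wr Loc} (hm : SimW m d) (h : ∃ m', Wk m m' ∧ Gw c' m') :
    ∃ d', Wk d d' ∧ Gw c' d' := by
  obtain ⟨m', hw, hg⟩ := h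
  obtain ⟨d', hwd, hs⟩ := simW_wk hm hw
  exact ⟨d', hwd, gwSimW hg hs⟩

theorem t3 {m d : Wr Loc} {s : St Loc} (hm : SimW m d)
    (h : ∃ s', BigS m s' ∧ SG s s') : ∃ s'', BigS d s'' ∧ SG s s'' := by
  obtain ⟨s', hb, hsg⟩ := h
  obtain ⟨s'', hb', hs'⟩ := simW_bigS hm hb
  exact ⟨s'', hb', sgTrans hsg hs'⟩

theorem t4 {m d : Wr Loc} {v : Val Loc} {s : St Loc} (hm : SimW m d)
    (h : ∃ v' s', BigV m v' s' ∧ GVal v v' ∧ SG s s') :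
    ∃ v'' s'', BigV d v'' s'' ∧ GVal v v'' ∧ SG s s'' := by
  obtain ⟨v', s', hb, hgv, hsg⟩ := h
  obtain ⟨v'', s'', hb', hv', hs'⟩ := simW_bigV hm hb
  exact ⟨v'', s'', hb', gvalTrans hgv hv', sgTrans hsg hs'⟩

/-! ### The main lemma: `(Gr, Gw)` satisfies the writer simulation conditions -/

theorem gwMain : ∀ (c : Wr Loc) {d : Wr Loc}, Gw c d →
    (∀ c', (WTr c (.tau c') ∨ ∃ s, WTr c (.out s c')) → ∃ d', Wk d d' ∧ Gw c' d') ∧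
    (∀ s, WTr c (.dn s) → ∃ s', BigS d s' ∧ SG s s') ∧
    (∀ v s, WTr c (.dnV v s) → ∃ v' s', BigV d v' s' ∧ GVal v v' ∧ SG s s')
  | .assignW e c₁, d, h => by
    cases h with
    | assignW hc hm =>
      have ih := gwMain c₁ hc
      refine ⟨?_, ?_, ?_⟩
      · rintro c' (ht | ⟨s, ho⟩)
        · cases ht with
          | asgTau ht' =>
            obtain ⟨m₂, hw, hg⟩ := ih.1 _ (Or.inl ht')
            exact t2 hm ⟨_, wkAsg hw, .assignW hg (simW_refl _)⟩
        · cases ho with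
          | asgOut ho' =>
            obtain ⟨m₂, hw, hg⟩ := ih.1 _ (Or.inr ⟨_, ho'⟩)
            exact t2 hm ⟨_, wkAsg hw, .assignW hg (simW_refl _)⟩
      · intro s hdn
        cases hdn with
        | @asgDn _ _ v s₀ l hl hdv =>
          obtain ⟨v', s', ⟨n, hwk, hdn'⟩, hgv, hsg⟩ := ih.2.2 _ _ hdv
          have hev := eevG hsg e
          rw [hl] at hev
          obtain ⟨w, hw, hgw⟩ := gopt_some_left hev
          cases hgw with
          | loc l =>
            exact t3 hm ⟨updS s' l v', ⟨.assignW e n, wkAsg hwk, .asgDn hw hdn'⟩,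
              sgUpd hsg hgv⟩
      · intro v s hdn; cases hdn
  | .seqW c₁ q₀, d, h => by
    cases h with
    | seqW hc hq hm =>
      have ih := gwMain c₁ hc
      refine ⟨?_, ?_, ?_⟩
      · rintro c' (ht | ⟨s, ho⟩)
        · cases ht with
          | seqTau ht' =>
            obtain ⟨m₂, hw, hg⟩ := ih.1 _ (Or.inl ht')
            exact t2 hm ⟨_, wkSeq hw, .seqW hg hq (simW_refl _)⟩
          | seqDn hdn =>
            obtain ⟨s', ⟨n, hwk, hdn'⟩, hsg⟩ := ih.2.1 _ hdn
            exact t2 hm ⟨_, wk_trans (wkSeq hwk)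
              (Relation.ReflTransGen.single (Or.inl (WTr.seqDn hdn'))),
              .runW hq hsg (simW_refl _)⟩
        · cases ho with
          | seqOut ho' =>
            obtain ⟨m₂, hw, hg⟩ := ih.1 _ (Or.inr ⟨_, ho'⟩)
            exact t2 hm ⟨_, wkSeq hw, .seqW hg hq (simW_refl _)⟩
          | seqDnV hdv =>
            obtain ⟨v', s', ⟨n, hwk, hdn'⟩, hgv, hsg⟩ := ih.2.2 _ _ hdv
            exact t2 hm ⟨_, wk_trans (wkSeq hwk)
              (Relation.ReflTransGen.single (Or.inr ⟨s', WTr.seqDnV hdn'⟩)),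
              .runW hq hsg (simW_refl _)⟩
      · intro s hdn; cases hdn
      · intro v s hdn; cases hdn
  | .refW c₁, d, h => by
    cases h with
    | refW hc hm =>
      have ih := gwMain c₁ hc
      refine ⟨?_, ?_, ?_⟩
      · rintro c' (ht | ⟨s, ho⟩)
        · cases ht with
          | refTau ht' =>
            obtain ⟨m₂, hw, hg⟩ := ih.1 _ (Or.inl ht')
            exact t2 hm ⟨_, wkRef hw, .refW hg (simW_refl _)⟩
        · cases ho with
          | refOut ho' =>
            obtain ⟨m₂, hw, hg⟩ := ih.1 _ (Or.inr ⟨_, ho'⟩)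
            exact t2 hm ⟨_, wkRef hw, .refW hg (simW_refl _)⟩
      · intro s hdn; cases hdn
      · intro v s hdn
        cases hdn with
        | @refDn _ v₀ s₀ l hdv hnone =>
          obtain ⟨v', s', ⟨n, hwk, hdn'⟩, hgv, hsg⟩ := ih.2.2 _ _ hdv
          have hnone' : s' l = none := by
            have := hsg l; rw [hnone] at this; exact gopt_none_left this
          exact t4 hm ⟨.inl l, updS s' l v', ⟨.refW n, wkRef hwk, .refDn hdn' hnone'⟩,
            .loc l, sgUpd hsg hgv⟩
  | .outW s₀ c₁, d, h => by
    cases h with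
    | outW hsg hc hm =>
      refine ⟨?_, ?_, ?_⟩
      · rintro c' (ht | ⟨s, ho⟩)
        · cases ht
        · cases ho with
          | outW =>
            exact t2 hm ⟨_, Relation.ReflTransGen.single (Or.inr ⟨_, WTr.outW⟩), hc⟩
      · intro s hdn; cases hdn
      · intro v s hdn; cases hdn
  | .runW p s₀, d, h => by
    cases h with
    | runW hp hsg hm =>
      refine ⟨?_, ?_, ?_⟩
      · rintro c' (ht | ⟨s, ho⟩)
        · cases ht with
          | runW hrs =>
            obtain ⟨m', hm', hg⟩ := grStep hp hsg hrs
            exact t2 hm ⟨m', Relation.ReflTransGen.single (Or.inl (WTr.runW hm')), hg⟩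
        · cases ho
      · intro s hdn; cases hdn
      · intro v s hdn; cases hdn
  | .retV v₀ s₀, d, h => by
    cases h with
    | retV hgv hsg hm =>
      refine ⟨?_, ?_, ?_⟩
      · rintro c' (ht | ⟨s, ho⟩)
        · cases ht
        · cases ho
      · intro s hdn; cases hdn
      · intro v s hdn
        cases hdn with
        | retV => exact t4 hm ⟨_, _, ⟨_, wk_refl _, WTr.retV⟩, hgv, hsg⟩
  | .retS s₀, d, h => by
    cases h with
    | retS hsg hm =>
      refine ⟨?_, ?_, ?_⟩
      · rintro c' (ht | ⟨s, ho⟩)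
        · cases ht
        · cases ho
      · intro s hdn
        cases hdn with
        | retS => exact t3 hm ⟨_, ⟨_, wk_refl _, WTr.retS⟩, hsg⟩
      · intro v s hdn; cases hdn

/-! ### `(Gr, Gw)` is a termination simulation; precongruence of similarity -/

theorem isTermSim_G : IsTermSim (Gr (Loc := Loc)) Gw := by
  refine ⟨?_, ?_, ?_, ?_⟩
  · intro p q s c hpq hr; exact grStep hpq (sgRefl s) hr
  · intro c d c' hcd hstep; exact (gwMain c hcd).1 c' hstep
  · intro c d s hcd hdn
    obtain ⟨s', hb, hsg⟩ := (gwMain c hcd).2.1 s hdn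
    exact ⟨s', hb, sg_srel hsg⟩
  · intro c d v s hcd hdn
    obtain ⟨v', s', hb, hgv, hsg⟩ := (gwMain c hcd).2.2 v s hdn
    exact ⟨v', s', hb, gval_vrel hgv, sg_srel hsg⟩

theorem gr_sim {p q : Rd Loc} (h : Gr p q) : SimR p q := ⟨Gr, Gw, isTermSim_G, h⟩

theorem gw_sim {c d : Wr Loc} (h : Gw c d) : SimW c d := ⟨Gr, Gw, isTermSim_G, h⟩

/-- Sort-generic similarity. -/
def SimT : ∀ {h : Sort2}, Tm2 Loc h → Tm2 Loc h → Prop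
  | .r, p, q => SimR p q
  | .w, c, d => SimW c d

mutual
theorem congR : ∀ {h : Sort2} (C : CtxR Loc h) {t t' : Tm2 Loc h},
    SimT t t' → SimR (plugR C t) (plugR C t')
  | _, .hole, _, _, ht => ht
  | _, .whileE _ C, _, _, ht =>
    gr_sim (.whileE (grOfSim (congR C ht)) (simR_refl _))
  | _, .assign _ C, _, _, ht =>
    gr_sim (.assign (grOfSim (congR C ht)) (simR_refl _))
  | _, .iteL _ C q, _, _, ht =>
    gr_sim (.iteG (grOfSim (congR C ht)) (grRefl q) (simR_refl _))
  | _, .iteR _ p C, _, _, ht =>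
    gr_sim (.iteG (grRefl p) (grOfSim (congR C ht)) (simR_refl _))
  | _, .seqL C q, _, _, ht =>
    gr_sim (.seqG (grOfSim (congR C ht)) (grRefl q) (simR_refl _))
  | _, .seqR p C, _, _, ht =>
    gr_sim (.seqG (grRefl p) (grOfSim (congR C ht)) (simR_refl _))
  | _, .ref C, _, _, ht => gr_sim (.refG (grOfSim (congR C ht)) (simR_refl _))
  | _, .proc C, _, _, ht => gr_sim (.procG (grOfSim (congR C ht)) (simR_refl _))
theorem congW : ∀ {h : Sort2} (C : CtxW Loc h) {t t' : Tm2 Loc h},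
    SimT t t' → SimW (plugW C t) (plugW C t')
  | _, .hole, _, _, ht => ht
  | _, .assignW _ C, _, _, ht =>
    gw_sim (.assignW (gwOfSim (congW C ht)) (simW_refl _))
  | _, .seqWL C q, _, _, ht =>
    gw_sim (.seqW (gwOfSim (congW C ht)) (grRefl q) (simW_refl _))
  | _, .seqWR c C, _, _, ht =>
    gw_sim (.seqW (gwRefl c) (grOfSim (congR C ht)) (simW_refl _))
  | _, .refW C, _, _, ht => gw_sim (.refW (gwOfSim (congW C ht)) (simW_refl _))
  | _, .outWC s C, _, _, ht =>
    gw_sim (.outW (sgRefl s) (gwOfSim (congW C ht)) (simW_refl _))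
  | _, .outWS Cs c, _, _, ht =>
    gw_sim (.outW (congS Cs ht) (gwRefl c) (simW_refl _))
  | _, .runWP C s, _, _, ht =>
    gw_sim (.runW (grOfSim (congR C ht)) (sgRefl s) (simW_refl _))
  | _, .runWS p Cs, _, _, ht =>
    gw_sim (.runW (grRefl p) (congS Cs ht) (simW_refl _))
  | _, .retVV C s, _, _, ht =>
    gw_sim (.retV (.rd (grOfSim (congR C ht))) (sgRefl s) (simW_refl _))
  | _, .retVS v Cs, _, _, ht =>
    gw_sim (.retV (gvalRefl v) (congS Cs ht) (simW_refl _))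
  | _, .retSS Cs, _, _, ht => gw_sim (.retS (congS Cs ht) (simW_refl _))
theorem congS : ∀ {h : Sort2} (C : CtxS Loc h) {t t' : Tm2 Loc h},
    SimT t t' → SG (plugS C t) (plugS C t')
  | _, .mk s l C, _, _, ht => sgUpd (sgRefl s) (.rd (grOfSim (congR C ht)))
end

/-! ### Adequacy -/

theorem simW_conv {c d : Wr Loc} (h : SimW c d) (hc : ConvW c) : ConvW d := by
  rcases hc with ⟨v, s, hb⟩ | ⟨s, hb⟩
  · obtain ⟨v', s', hb', _, _⟩ := simW_bigV h hb
    exact Or.inl ⟨v', s', hb'⟩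
  · obtain ⟨s', hb', _⟩ := simW_bigS h hb
    exact Or.inr ⟨s', hb'⟩

theorem simR_conv {p q : Rd Loc} {s : St Loc} (h : SimR p q) (hc : ConvR p s) :
    ConvR q s := by
  obtain ⟨c, hr, hcw⟩ := hc
  obtain ⟨d, hd, hsw⟩ := isTermSim_sim.1 p q s c h hr
  exact ⟨d, hd, simW_conv hsw hcw⟩

/-- two-way termination similarity is sound for contextual
equivalence in Ref²: if `p ≡_r q` then `p ≡ctx_r q`, and if `c ≡_w d` then
`c ≡ctx_w d`, where `≡ = ≼ ∩ ≽` is the symmetrization of termination similarity. -/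
theorem termination_similarity_sound_for_contextual_equivalence :
    (∀ p q : Rd Loc, EqvR p q → CtxEqR p q) ∧
    (∀ c d : Wr Loc, EqvW c d → CtxEqW c d) := by
  constructor
  · rintro p q ⟨h1, h2⟩
    exact ⟨fun C s => ⟨fun hc => simR_conv (congR C h1) hc,
        fun hc => simR_conv (congR C h2) hc⟩,
      fun C => ⟨fun hc => simW_conv (congW C h1) hc,
        fun hc => simW_conv (congW C h2) hc⟩⟩
  · rintro c d ⟨h1, h2⟩
    exact ⟨fun C s => ⟨fun hc => simR_conv (congR C h1) hc,
        fun hc => simR_conv (congR C h2) hc⟩,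
      fun C => ⟨fun hc => simW_conv (congW C h1) hc,
        fun hc => simW_conv (congW C h2) hc⟩⟩

end RefLang
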